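/- arXiv:2002.08788 — 11 statements merged into one kernel-verified Lean document; each statement's English description precedes it below -/
import Mathlib

section
/- Let C′ be a Hermitian 4×4 complex matrix, let t₁, t₂, k be real numbers, let T = diag(t₁, t₂, −t₁, −t₂) and let I = (0,0,1,1)ᵀ ∈ ℂ⁴. Suppose e′ = (e₁, conj(e₁), k/2, k/2)ᵀ satisfies C′e′ = I, and v′ = (v₁, −1, 1, 1)ᵀ satisfies v′ = C′Tv′. Then conj(e₁)·v₁ − e₁ = −(k + t₁ + t₂). -/
open Matrix Complex

lemma herm_dot_aux {A : Matrix (Fin 4) (Fin 4) ℂ} (hA : A.IsHermitian)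
    (x y : Fin 4 → ℂ) : star x ⬝ᵥ A.mulVec y = star (A.mulVec x) ⬝ᵥ y := by
  rw [Matrix.dotProduct_mulVec, Matrix.star_mulVec, hC']
where hC' : Aᴴ = A := hA

theorem point_A_scalar_relation
    (C' : Matrix (Fin 4) (Fin 4) ℂ) (hC : C'.IsHermitian)
    (t₁ t₂ k : ℝ) (e₁ v₁ : ℂ)
    (he : C'.mulVec ![e₁, (starRingEnd ℂ) e₁, (k : ℂ) / 2, (k : ℂ) / 2] = ![0, 0, 1, 1])
    (hv : ![v₁, -1, 1, 1] =
      C'.mulVec ((Matrix.diagonal ![(t₁ : ℂ), (t₂ : ℂ), -(t₁ : ℂ), -(t₂ : ℂ)]).mulVec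
        ![v₁, -1, 1, 1])) :
    (starRingEnd ℂ) e₁ * v₁ - e₁ = -((k : ℂ) + (t₁ : ℂ) + (t₂ : ℂ)) := by
  have key := herm_dot_aux hC
    ((Matrix.diagonal ![(t₁ : ℂ), (t₂ : ℂ), -(t₁ : ℂ), -(t₂ : ℂ)]).mulVec ![v₁, -1, 1, 1])
    ![e₁, (starRingEnd ℂ) e₁, (k : ℂ) / 2, (k : ℂ) / 2]
  rw [he, ← hv] at key
  simp only [Matrix.mulVec_diagonal, dotProduct, Fin.sum_univ_four,
    Matrix.cons_val_zero, Matrix.cons_val_one, Matrix.head_cons, Matrix.cons_val_two,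
    Matrix.tail_cons, Matrix.cons_val_three, Pi.star_apply, star_mul', star_neg, star_one,
    Complex.star_def, Complex.conj_ofReal, map_neg, _root_.map_one, Complex.conj_conj,
    mul_zero, mul_one, neg_neg] at key
  have key2 := congrArg (starRingEnd ℂ) key
  simp only [map_add, _root_.map_mul, map_neg, map_sub, Complex.conj_conj,
    Complex.conj_ofReal, map_div₀, map_ofNat, map_zero, _root_.map_one] at key2
  linear_combination -key2
end

section
/- Let λ be real, let y be real with y ≠ 0 and y ≠ −1/2, and let τ be real. Define e₁ = λ(2y+1)(1 + iτ(1 + 1/y))(1 − iτ)/(2(1 + iτ)) and v₁ = ((2y−1)/(2y+1) + iτ)(1 − iτ)/(1 + iτ)². Then conj(e₁)·v₁ − e₁ = −λ. -/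
open Complex

lemma traj_aux (lam y t : ℂ) (hy : y ≠ 0) (hy2 : 2 * y + 1 ≠ 0)
    (h1 : 1 + t ≠ 0) (h2 : 1 - t ≠ 0) :
    (lam * (2 * y + 1) * (1 - t * (1 + 1 / y)) * (1 + t) / (2 * (1 - t))) *
      (((2 * y - 1) / (2 * y + 1) + t) * (1 - t) / (1 + t) ^ 2) -
      lam * (2 * y + 1) * (1 + t * (1 + 1 / y)) * (1 - t) / (2 * (1 + t)) = -lam := by
  have h2' : (2:ℂ) * (1 - t) ≠ 0 := mul_ne_zero two_ne_zero h2
  have hsq : (1 + t) ^ 2 ≠ 0 := pow_ne_zero _ h1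
  have hA : (2:ℂ) * (1 - t) * (1 + t) ^ 2 ≠ 0 := mul_ne_zero h2' hsq
  have hB : (2:ℂ) * (1 + t) ≠ 0 := mul_ne_zero two_ne_zero h1
  rw [div_mul_div_comm, div_sub_div _ _ hA hB, div_eq_iff (mul_ne_zero hA hB)]
  field_simp
  ring

theorem point_A_trajectory_identity (lam y τ : ℝ) (hy0 : y ≠ 0) (hy : y ≠ -1/2)
    (e₁ v₁ : ℂ)
    (he : e₁ = (lam : ℂ) * (2 * (y : ℂ) + 1) * (1 + Complex.I * (τ : ℂ) * (1 + 1 / (y : ℂ))) *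
      (1 - Complex.I * (τ : ℂ)) / (2 * (1 + Complex.I * (τ : ℂ))))
    (hv : v₁ = (((2 * (y : ℂ) - 1) / (2 * (y : ℂ) + 1)) + Complex.I * (τ : ℂ)) *
      (1 - Complex.I * (τ : ℂ)) / (1 + Complex.I * (τ : ℂ)) ^ 2) :
    (starRingEnd ℂ) e₁ * v₁ - e₁ = -(lam : ℂ) := by
  have hyC : (y : ℂ) ≠ 0 := Complex.ofReal_ne_zero.mpr hy0
  have hy2 : 2 * (y : ℂ) + 1 ≠ 0 := by
    intro h
    apply hy
    have : (y : ℂ) = ((-1/2 : ℝ) : ℂ) := by push_cast; linear_combination h / 2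
    exact_mod_cast this
  have hp : 1 + Complex.I * (τ : ℂ) ≠ 0 := by
    intro h
    have := congrArg Complex.re h
    simp at this
  have hm : 1 - Complex.I * (τ : ℂ) ≠ 0 := by
    intro h
    have := congrArg Complex.re h
    simp at this
  have hc : (starRingEnd ℂ) e₁ =
      (lam : ℂ) * (2 * (y : ℂ) + 1) * (1 - Complex.I * (τ : ℂ) * (1 + 1 / (y : ℂ))) *
        (1 + Complex.I * (τ : ℂ)) / (2 * (1 - Complex.I * (τ : ℂ))) := by
    rw [he]
    simp only [map_div₀, map_mul, map_add, map_sub, map_one, map_ofNat, one_div, map_inv₀,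
      Complex.conj_ofReal, Complex.conj_I]
    ring
  rw [hc, hv, he]
  exact traj_aux (lam : ℂ) (y : ℂ) (Complex.I * (τ : ℂ)) hyC hy2 hp hm
end

section
/- Let λ be real, let y be real with −1 < y < 0, and let τ be real with τ²(1+y) = 1−y. Then e₁(y,τ) = λ(2y+1)(1 + iτ(1 + 1/y))(1 − iτ)/(2(1 + iτ)) is real and equals λ(2y+1)/(2y). -/
open Complex

theorem point_A_trajectory_boundary_real (lam y τ : ℝ)
    (hy1 : -1 < y) (hy0 : y < 0) (hτ : τ ^ 2 * (1 + y) = 1 - y) :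
    (lam : ℂ) * (2 * (y : ℂ) + 1) * (1 + Complex.I * (τ : ℂ) * (1 + 1 / (y : ℂ))) *
      (1 - Complex.I * (τ : ℂ)) / (2 * (1 + Complex.I * (τ : ℂ)))
      = ((lam * (2 * y + 1) / (2 * y) : ℝ) : ℂ) := by
  have hy : (y : ℂ) ≠ 0 := by exact_mod_cast hy0.ne
  have h1 : (1 : ℂ) + Complex.I * (τ : ℂ) ≠ 0 := by
    intro h
    have := congrArg Complex.re h
    simp at this
  have hτC : (τ : ℂ) ^ 2 * (1 + (y : ℂ)) = 1 - (y : ℂ) := by exact_mod_cast hτ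
  push_cast
  field_simp
  ring_nf
  linear_combination ((lam:ℂ)*(1-4*(y:ℂ)^2) + 2*(lam:ℂ)*y*(1+2*(y:ℂ))) * hτC + ((lam:ℂ)*(τ:ℂ)^2*(4*(y:ℂ)^3+4*(y:ℂ)^2-(y:ℂ)-1) - 2*(lam:ℂ)*(y:ℂ)*(τ:ℂ)^2*(1+(y:ℂ))*(1+2*(y:ℂ))) * Complex.I_sq
end

section
/- Let λ > 0. For every (y,τ) with −1 < y < 0, y ≠ −1/2, and τ²(1+y) > 1−y, the complex number e₁(y,τ) = λ(2y+1)(1 + iτ(1 + 1/y))(1 − iτ)/(2(1 + iτ)) satisfies Re(e₁) < λ/2, Re(e₁) ≠ 0 and Im(e₁) ≠ 0. -/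
open Complex

theorem point_A_image_in_Omega (lam y τ : ℝ) (hlam : 0 < lam)
    (hy1 : -1 < y) (hy0 : y < 0) (hy : y ≠ -1/2) (hτ : τ ^ 2 * (1 + y) > 1 - y)
    (e₁ : ℂ)
    (he : e₁ = (lam : ℂ) * (2 * (y : ℂ) + 1) * (1 + Complex.I * (τ : ℂ) * (1 + 1 / (y : ℂ))) *
      (1 - Complex.I * (τ : ℂ)) / (2 * (1 + Complex.I * (τ : ℂ)))) :
    e₁.re < lam / 2 ∧ e₁.re ≠ 0 ∧ e₁.im ≠ 0 := by
  have hyne : y ≠ 0 := ne_of_lt hy0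
  have hτ2 : 1 < τ ^ 2 := by nlinarith
  have hτne : τ ≠ 0 := by intro h; rw [h] at hτ2; norm_num at hτ2
  have hP : 0 < y + τ ^ 2 * (y + 2) := by nlinarith
  have hB : 2 * y * (1 + τ ^ 2) < 0 := by nlinarith
  have h2y1 : 2 * y + 1 ≠ 0 := by
    intro h; apply hy; linarith
  have hden : (1 : ℂ) + Complex.I * (τ : ℂ) ≠ 0 := by
    intro h
    have := congrArg Complex.re h
    simp at this
  have hyC : (y : ℂ) ≠ 0 := by exact_mod_cast hyne
  have key : e₁ = ((lam * (2 * y + 1) * (y + τ ^ 2 * (y + 2)) / (2 * y * (1 + τ ^ 2)) : ℝ) : ℂ)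
      + ((lam * (2 * y + 1) * τ * (1 - y - τ ^ 2 * (1 + y)) / (2 * y * (1 + τ ^ 2)) : ℝ) : ℂ) * Complex.I := by
    have hτC : (1 : ℂ) + (τ : ℂ) ^ 2 ≠ 0 := by
      have h0 : ((1 + τ ^ 2 : ℝ) : ℂ) ≠ 0 := Complex.ofReal_ne_zero.mpr (by positivity)
      push_cast at h0
      exact h0
    rw [he]
    push_cast
    field_simp
    ring_nf
    simp only [Complex.I_sq]
    ring
  have hre : e₁.re = lam * (2 * y + 1) * (y + τ ^ 2 * (y + 2)) / (2 * y * (1 + τ ^ 2)) := by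
    rw [key]
    simp only [Complex.add_re, Complex.mul_re, Complex.ofReal_re, Complex.ofReal_im,
      Complex.I_re, Complex.I_im]
    ring
  have him : e₁.im = lam * (2 * y + 1) * τ * (1 - y - τ ^ 2 * (1 + y)) / (2 * y * (1 + τ ^ 2)) := by
    rw [key]
    simp only [Complex.add_im, Complex.mul_im, Complex.ofReal_re, Complex.ofReal_im,
      Complex.I_re, Complex.I_im]
    ring
  refine ⟨?_, ?_, ?_⟩
  · rw [hre, div_lt_iff_of_neg hB]
    nlinarith [sq_nonneg y, sq_nonneg (τ * (y + 1)), mul_pos hlam (mul_self_pos.mpr hyne)]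
  · rw [hre]
    apply div_ne_zero
    · exact mul_ne_zero (mul_ne_zero (ne_of_gt hlam) h2y1) (ne_of_gt hP)
    · exact ne_of_lt hB
  · rw [him]
    apply div_ne_zero
    · refine mul_ne_zero (mul_ne_zero (mul_ne_zero (ne_of_gt hlam) h2y1) hτne) ?_
      nlinarith
    · exact ne_of_lt hB
end

section
/- Let λ > 0 and let (y,τ) satisfy −1 < y < 0, y ≠ −1/2 and τ²(1+y) > 1−y. Then the partial derivatives of the map (y,τ) ↦ e₁(y,τ) = λ(2y+1)(1 + iτ(1 + 1/y))(1 − iτ)/(2(1 + iτ)), namely ∂e₁/∂y = λ[2 − iτ(1/y² − 2)](1 − iτ)/(2(1 + iτ)) and ∂e₁/∂τ = λ(2y+1){2τ(1 + 1/y) − i[(1 − 1/y) − τ²(1 + 1/y)]}/(2(1 + iτ)²), are both nonzero and are linearly independent over ℝ as vectors in ℂ ≅ ℝ². In particular, viewed as a map from ℝ² to ℝ², e₁ has invertible derivative at every such point and is locally injective there. -/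
open Complex

/-- The trajectory map `e₁(y,τ)` of the paper, for a fixed real parameter `lam`. -/
noncomputable def e1Traj (lam y τ : ℝ) : ℂ :=
  (lam : ℂ) * (2 * (y : ℂ) + 1) * (1 + Complex.I * (τ : ℂ) * (1 + 1 / (y : ℂ))) *
    (1 - Complex.I * (τ : ℂ)) / (2 * (1 + Complex.I * (τ : ℂ)))

set_option maxHeartbeats 1600000 in
theorem point_A_local_injectivity (lam y τ : ℝ) (hlam : 0 < lam)
    (hy1 : -1 < y) (hy0 : y < 0) (hy : y ≠ -1/2) (hτ : τ ^ 2 * (1 + y) > 1 - y)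
    (d₁ d₂ : ℂ)
    (hd₁ : d₁ = (lam : ℂ) * (2 - Complex.I * (τ : ℂ) * (1 / (y : ℂ) ^ 2 - 2)) *
      (1 - Complex.I * (τ : ℂ)) / (2 * (1 + Complex.I * (τ : ℂ))))
    (hd₂ : d₂ = (lam : ℂ) * (2 * (y : ℂ) + 1) *
      (2 * (τ : ℂ) * (1 + 1 / (y : ℂ)) -
        Complex.I * ((1 - 1 / (y : ℂ)) - (τ : ℂ) ^ 2 * (1 + 1 / (y : ℂ)))) /
      (2 * (1 + Complex.I * (τ : ℂ)) ^ 2)) :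
    HasDerivAt (fun y' : ℝ => e1Traj lam y' τ) d₁ y ∧
    HasDerivAt (fun τ' : ℝ => e1Traj lam y τ') d₂ τ ∧
    d₁ ≠ 0 ∧ d₂ ≠ 0 ∧ LinearIndependent ℝ ![d₁, d₂] ∧
    ∃ U ∈ nhds (y, τ), Set.InjOn (fun p : ℝ × ℝ => e1Traj lam p.1 p.2) U := by
  have hy' : y ≠ 0 := ne_of_lt hy0
  have hyC : (y:ℂ) ≠ 0 := Complex.ofReal_ne_zero.mpr hy'
  have hττ : (1:ℝ) + τ^2 ≠ 0 := by positivity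
  have hD : (1:ℂ) + I * (τ:ℂ) ≠ 0 := by
    intro h
    have := congrArg Complex.re h
    simp at this
  have hden : (2:ℂ) * (1 + I * (τ:ℂ)) ≠ 0 := mul_ne_zero two_ne_zero hD
  set b : ℝ := 1/y^2 - 2 with hb
  set a : ℝ := 1 + 1/y with ha
  set u : ℝ := 2*τ*a with hu0
  set v : ℝ := (1 - 1/y) - τ^2*a with hv0
  set r1 : ℝ := lam*(2*(1-τ^2) - 2*τ^2*b)/(2*(1+τ^2)) with hr1
  set s1 : ℝ := lam*(-(4*τ) - τ*b*(1-τ^2))/(2*(1+τ^2)) with hs1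
  set r2 : ℝ := lam*(2*y+1)*(u*(1-τ^2) - 2*τ*v)/(2*(1+τ^2)^2) with hr2
  set s2 : ℝ := lam*(2*y+1)*(-(2*u*τ) - v*(1-τ^2))/(2*(1+τ^2)^2) with hs2
  -- rectangular forms
  have hbC : 1/(y:ℂ)^2 - 2 = ((b:ℝ):ℂ) := by rw [hb]; push_cast; ring
  have haC : 1 + 1/(y:ℂ) = ((a:ℝ):ℂ) := by rw [ha]; push_cast; ring
  have hd1R : d₁ = (r1:ℂ) + (s1:ℂ)*I := by
    rw [hd₁, div_eq_iff hden, hbC]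
    apply Complex.ext <;> simp <;> rw [hr1, hs1] <;> field_simp <;> ring
  have hd2R : d₂ = (r2:ℂ) + (s2:ℂ)*I := by
    have hden2 : (2:ℂ) * (1 + I * (τ:ℂ))^2 ≠ 0 := mul_ne_zero two_ne_zero (pow_ne_zero 2 hD)
    have hUC : 2*(τ:ℂ)*(1 + 1/(y:ℂ)) = ((u:ℝ):ℂ) := by rw [hu0, ha]; push_cast; ring
    have hVC : (1 - 1/(y:ℂ)) - (τ:ℂ)^2*(1 + 1/(y:ℂ)) = ((v:ℝ):ℂ) := by
      rw [hv0, ha]; push_cast; ring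
    rw [hd₂, div_eq_iff hden2, hUC, hVC]
    apply Complex.ext <;> simp [pow_two] <;> rw [hr2, hs2, hu0, hv0, ha] <;>
      field_simp <;> ring
  -- determinant
  have hw : 2*y+1 ≠ 0 := fun h => hy (by linarith)
  have hyneg : 1/y < 0 := one_div_neg.mpr hy0
  have h1y : (0:ℝ) < 1 - 1/y := by linarith
  have hdet_ne : r1*s2 - s1*r2 ≠ 0 := by
    have hpos : (0:ℝ) < 1 + τ^2*(1+1/y)^2 := by positivity
    have hdet : r1*s2 - s1*r2
        = -(lam^2*(2*y+1)*(1-1/y)*(1+τ^2*(1+1/y)^2)/(2*(1+τ^2))) := by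
      rw [hr1, hs1, hr2, hs2, hu0, hv0, ha, hb]
      field_simp
      ring
    rw [hdet]
    refine neg_ne_zero.mpr (div_ne_zero ?_ (by positivity))
    exact mul_ne_zero (mul_ne_zero (mul_ne_zero (pow_ne_zero 2 hlam.ne') hw) h1y.ne')
      hpos.ne'
  -- key linear independence fact
  have key : ∀ s t : ℝ, s • d₁ + t • d₂ = 0 → s = 0 ∧ t = 0 := by
    intro s t hst
    rw [hd1R, hd2R] at hst
    have h1 : s * r1 + t * r2 = 0 := by
      have := congrArg Complex.re hst
      simpa using this
    have h2 : s * s1 + t * s2 = 0 := by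
      have := congrArg Complex.im hst
      simpa using this
    constructor
    · have hs : s * (r1*s2 - s1*r2) = 0 := by linear_combination s2 * h1 - r2 * h2
      rcases mul_eq_zero.mp hs with h | h
      · exact h
      · exact absurd h hdet_ne
    · have ht : t * (r1*s2 - s1*r2) = 0 := by linear_combination r1 * h2 - s1 * h1
      rcases mul_eq_zero.mp ht with h | h
      · exact h
      · exact absurd h hdet_ne
  have hd1ne : d₁ ≠ 0 := by
    intro h
    have := (key 1 0 (by simp [h])).1
    exact one_ne_zero this
  have hd2ne : d₂ ≠ 0 := by
    intro h
    have := (key 0 1 (by simp [h])).2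
    exact one_ne_zero this
  -- the two partial derivatives
  have hA1 : HasDerivAt (fun y' : ℝ => e1Traj lam y' τ) d₁ y := by
    have h0 : HasDerivAt (fun z : ℂ => 2*z+1) 2 (y:ℂ) := by
      simpa using ((hasDerivAt_id ((y:ℝ):ℂ)).const_mul (2:ℂ)).add_const 1
    have h2 : HasDerivAt (fun z : ℂ => 1 + I*(τ:ℂ)*(1+1/z))
        (I*(τ:ℂ)*(-((y:ℂ)^2)⁻¹)) (y:ℂ) := by
      have := (((hasDerivAt_inv hyC).const_add (1:ℂ)).const_mul (I*(τ:ℂ))).const_add 1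
      simpa [one_div] using this
    have h4 := (((h0.const_mul ((lam:ℝ):ℂ)).mul h2).mul_const
      (1 - I*(τ:ℂ))).div_const (2*(1+I*(τ:ℂ)))
    have h5 := h4.comp_ofReal
    simp only [e1Traj]
    convert h5 using 1
    · rfl
    rw [hd₁]
    field_simp
    ring
  have hA2 : HasDerivAt (fun τ' : ℝ => e1Traj lam y τ') d₂ τ := by
    have h1 : HasDerivAt (fun t : ℂ => 1 + I*t*(1+1/(y:ℂ)))
        (I*1*(1+1/(y:ℂ))) (τ:ℂ) :=
      (((hasDerivAt_id ((τ:ℝ):ℂ)).const_mul I).mul_const (1+1/(y:ℂ))).const_add 1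
    have h2 : HasDerivAt (fun t : ℂ => 1 - I*t) (-(I*1)) (τ:ℂ) :=
      ((hasDerivAt_id ((τ:ℝ):ℂ)).const_mul I).const_sub 1
    have h3 : HasDerivAt (fun t : ℂ => 2*(1+I*t)) (2*(I*1)) (τ:ℂ) :=
      (((hasDerivAt_id ((τ:ℝ):ℂ)).const_mul I).const_add 1).const_mul 2
    have h4 := ((h1.const_mul ((lam:ℂ) * (2*(y:ℂ)+1))).mul h2).div h3 hden
    have h5 := h4.comp_ofReal
    simp only [e1Traj]
    convert h5 using 1
    · rfl
    rw [hd2R, eq_div_iff (pow_ne_zero 2 hden), haC]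
    apply Complex.ext <;> simp [pow_two] <;> rw [hr2, hs2, hu0, hv0, ha] <;>
      field_simp <;> ring
  refine ⟨hA1, hA2, hd1ne, hd2ne, LinearIndependent.pair_iff.mpr key, ?_⟩
  -- local injectivity
  have hGc : ContDiffAt ℂ 1 (fun q : ℂ × ℂ => (lam:ℂ) * (2*q.1+1) *
      (1 + I*q.2*(1+1/q.1)) * (1-I*q.2) / (2*(1+I*q.2))) (((y:ℂ), (τ:ℂ))) := by
    have c1 : ContDiffAt ℂ 1 (fun q : ℂ × ℂ => q.1) (((y:ℂ), (τ:ℂ))) := contDiffAt_fst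
    have c2 : ContDiffAt ℂ 1 (fun q : ℂ × ℂ => q.2) (((y:ℂ), (τ:ℂ))) := contDiffAt_snd
    have cinv : ContDiffAt ℂ 1 (fun q : ℂ × ℂ => 1/q.1) (((y:ℂ), (τ:ℂ))) := by
      simp only [one_div]; exact c1.inv hyC
    have cnum : ContDiffAt ℂ 1 (fun q : ℂ × ℂ => (lam:ℂ) * (2*q.1+1) *
        (1 + I*q.2*(1+1/q.1)) * (1-I*q.2)) (((y:ℂ), (τ:ℂ))) :=
      ((contDiffAt_const.mul ((contDiffAt_const.mul c1).add contDiffAt_const)).mul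
        (contDiffAt_const.add ((contDiffAt_const.mul c2).mul
          (contDiffAt_const.add cinv)))).mul
      (contDiffAt_const.sub (contDiffAt_const.mul c2))
    have cden : ContDiffAt ℂ 1 (fun q : ℂ × ℂ => 2*(1+I*q.2)) (((y:ℂ), (τ:ℂ))) :=
      contDiffAt_const.mul (contDiffAt_const.add (contDiffAt_const.mul c2))
    exact ContDiffAt.div (x := (((y:ℂ), (τ:ℂ)) : ℂ × ℂ)) cnum cden hden
  have hj : ContDiff ℝ 1 (fun p : ℝ×ℝ => ((((p.1:ℝ)):ℂ), (((p.2:ℝ)):ℂ))) :=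
    ContDiff.prodMk (Complex.ofRealCLM.contDiff.comp contDiff_fst)
      (Complex.ofRealCLM.contDiff.comp contDiff_snd)
  have hcd : ContDiffAt ℝ 1 (fun p : ℝ×ℝ => e1Traj lam p.1 p.2) (y,τ) := by
    simp only [e1Traj]
    have := ContDiffAt.comp (y, τ) (hGc.restrict_scalars ℝ) hj.contDiffAt
    simpa [Function.comp_def] using this
  have hdf : DifferentiableAt ℝ (fun p : ℝ×ℝ => e1Traj lam p.1 p.2) (y,τ) :=
    hcd.differentiableAt one_ne_zero
  set Df := fderiv ℝ (fun p : ℝ×ℝ => e1Traj lam p.1 p.2) (y,τ) with hDf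
  have h10 : Df (1,0) = d₁ := by
    have hcurve : HasDerivAt (fun t : ℝ => ((t, τ) : ℝ×ℝ)) ((1:ℝ),(0:ℝ)) y :=
      HasDerivAt.prodMk (hasDerivAt_id y) (hasDerivAt_const y τ)
    have := hdf.hasFDerivAt.comp_hasDerivAt y hcurve
    exact this.unique hA1
  have h01 : Df (0,1) = d₂ := by
    have hcurve : HasDerivAt (fun t : ℝ => ((y, t) : ℝ×ℝ)) ((0:ℝ),(1:ℝ)) τ :=
      HasDerivAt.prodMk (hasDerivAt_const τ y) (hasDerivAt_id τ)
    have := hdf.hasFDerivAt.comp_hasDerivAt τ hcurve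
    exact this.unique hA2
  have hrepr : ∀ z : ℝ×ℝ, Df z = z.1 • d₁ + z.2 • d₂ := by
    intro z
    have hz : z = z.1 • ((1:ℝ),(0:ℝ)) + z.2 • ((0:ℝ),(1:ℝ)) := by
      ext <;> simp
    conv_lhs => rw [hz]
    rw [map_add, map_smul, map_smul, h10, h01]
  have hinj : Function.Injective Df := by
    intro z1 z2 hz
    have h0 : Df (z1 - z2) = 0 := by rw [map_sub, hz, sub_self]
    rw [hrepr] at h0
    obtain ⟨e1, e2⟩ := key _ _ h0
    have : z1 - z2 = 0 := by
      ext
      · simpa using e1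
      · simpa using e2
    exact sub_eq_zero.mp this
  have hrank : Module.finrank ℝ (ℝ×ℝ) = Module.finrank ℝ ℂ := by
    simp [Complex.finrank_real_complex]
  let eL : (ℝ×ℝ) ≃ₗ[ℝ] ℂ :=
    LinearMap.linearEquivOfInjective (Df : (ℝ×ℝ) →ₗ[ℝ] ℂ) hinj hrank
  let eE : (ℝ×ℝ) ≃L[ℝ] ℂ := eL.toContinuousLinearEquiv
  have hcoe : (eE : (ℝ×ℝ) →L[ℝ] ℂ) = Df := ContinuousLinearMap.ext fun x => rfl
  have hstrict : HasStrictFDerivAt (fun p : ℝ×ℝ => e1Traj lam p.1 p.2)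
      ((eE : (ℝ×ℝ) ≃L[ℝ] ℂ) : (ℝ×ℝ) →L[ℝ] ℂ) (y,τ) := by
    rw [hcoe]
    exact hcd.hasStrictFDerivAt one_ne_zero
  have hev := hstrict.eventually_left_inverse
  refine ⟨{x | hstrict.localInverse _ _ _ ((fun p : ℝ×ℝ => e1Traj lam p.1 p.2) x) = x},
    hev, ?_⟩
  intro x1 h1 x2 h2 hfx
  rw [← h1, ← h2, hfx]
end

section
/- Let λ > 0. Define Σ₁ = {(y,τ) ∈ ℝ² : −1 < y < −1/2, τ²(1+y) > 1−y} and Σ₂ = {(y,τ) ∈ ℝ² : −1/2 < y < 0, τ²(1+y) > 1−y}, and Ω = {z ∈ ℂ : Re(z) < λ/2, Re(z) ≠ 0, Im(z) ≠ 0}. Then the map (y,τ) ↦ e₁(y,τ) = λ(2y+1)(1 + iτ(1 + 1/y))(1 − iτ)/(2(1 + iτ)) is a bijection from Σ₁ ∪ Σ₂ onto Ω. -/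
open Complex

lemma e1_eq (lam y t : ℝ) (hy : y ≠ 0) :
    e1Traj lam y t =
      ((lam*(2*y+1)*(y+(y+2)*t^2)/(2*y*(1+t^2)) : ℝ) : ℂ) +
      ((lam*(2*y+1)*(t*(1-y-(1+y)*t^2))/(2*y*(1+t^2)) : ℝ) : ℂ) * Complex.I := by
  have h1 : (1 + Complex.I * (t:ℂ)) ≠ 0 := by
    intro h
    have := congrArg Complex.re h
    simp at this
  have h2 : (y:ℂ) ≠ 0 := Complex.ofReal_ne_zero.mpr hy
  have h3 : ((1:ℂ) + (t:ℂ)^2) ≠ 0 := by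
    have : ((1:ℂ) + (t:ℂ)^2) = ((1 + t^2 : ℝ) : ℂ) := by push_cast; ring
    rw [this]
    exact Complex.ofReal_ne_zero.mpr (by positivity)
  rw [e1Traj]
  push_cast
  field_simp
  ring_nf
  simp only [Complex.I_sq]
  ring

lemma e1_re (lam y t : ℝ) (hy : y ≠ 0) :
    (e1Traj lam y t).re = lam*(2*y+1)*(y+(y+2)*t^2)/(2*y*(1+t^2)) := by
  rw [e1_eq lam y t hy]
  simp only [Complex.add_re, Complex.ofReal_re, Complex.mul_re, Complex.ofReal_im,
    Complex.I_re, Complex.I_im]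
  ring

lemma e1_im (lam y t : ℝ) (hy : y ≠ 0) :
    (e1Traj lam y t).im = lam*(2*y+1)*(t*(1-y-(1+y)*t^2))/(2*y*(1+t^2)) := by
  rw [e1_eq lam y t hy]
  simp only [Complex.add_im, Complex.ofReal_im, Complex.mul_im, Complex.ofReal_re,
    Complex.I_re, Complex.I_im]
  ring

lemma e1_eq_iff (lam y t : ℝ) (hy : y ≠ 0) (z : ℂ) :
    e1Traj lam y t = z ↔
      (z.re * (2*y*(1+t^2)) = lam*(2*y+1)*(y+(y+2)*t^2) ∧
       z.im * (2*y*(1+t^2)) = lam*(2*y+1)*(t*(1-y-(1+y)*t^2))) := by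
  have hd : (2*y*(1+t^2)) ≠ 0 :=
    mul_ne_zero (mul_ne_zero two_ne_zero hy) (by positivity)
  rw [Complex.ext_iff, e1_re lam y t hy, e1_im lam y t hy]
  constructor
  · rintro ⟨h1, h2⟩
    constructor
    · rw [← h1]; exact div_mul_cancel₀ _ hd
    · rw [← h2]; exact div_mul_cancel₀ _ hd
  · rintro ⟨h1, h2⟩
    constructor <;> rw [div_eq_iff hd] <;> linarith

set_option maxHeartbeats 1600000 in
/-- From a solution of the system, extract the auxiliary variable `x` and its properties. -/
lemma solution_facts (lam u v y t : ℝ) (hlam : 0 < lam) (hu2 : u < lam/2) (hu0 : u ≠ 0)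
    (hy0 : y < 0) (hcon : t^2*(1+y) > 1-y)
    (hE1 : u * (2*y*(1+t^2)) = lam*(2*y+1)*(y+(y+2)*t^2))
    (hE2 : v * (2*y*(1+t^2)) = lam*(2*y+1)*(t*(1-y-(1+y)*t^2))) :
    ∃ x : ℝ, 1 < x ∧ (2*lam*x^2-(2*u+3*lam)*x+4*u) < 0 ∧
      2*y*(u-lam*x) = lam*x ∧ t*(u*(1-x)) = v*x ∧
      v^2*(x*(2*lam*x^2-(2*u+3*lam)*x+4*u)) = u^2*((x-1)^2*(2*u-lam-2*lam*x)) := by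
  have hy : y ≠ 0 := ne_of_lt hy0
  have ht1 : (0:ℝ) < 1 + t^2 := by positivity
  have ht0 : t ≠ 0 := by
    intro h
    rw [h] at hcon
    nlinarith
  have ht2 : (0:ℝ) < t^2 := by positivity
  set x : ℝ := (y+(y+2)*t^2)/(1+t^2) with hxs
  have hxdef : x*(1+t^2) = y+(y+2)*t^2 := by
    rw [hxs]; field_simp
  have hx1 : 1 < x := by
    rw [hxs, lt_div_iff₀ ht1]; nlinarith
  have hX : t^2*(2+y-x) = x - y := by linear_combination -hxdef
  have hY : 2*y*(u-lam*x) = lam*x := by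
    have h0 : (1+t^2) * (2*y*(u-lam*x) - lam*x) = 0 := by
      linear_combination hE1 - lam*(2*y+1)*hxdef
    rcases mul_eq_zero.mp h0 with h | h
    · linarith
    · linarith
  have hulx : u - lam*x < 0 := by nlinarith [mul_pos hlam (sub_pos.mpr hx1)]
  have h2vy : 2*v*y = lam*(2*y+1)*(t*(1-x)) := by
    have h0 : (1+t^2) * (v*(2*y) - lam*(2*y+1)*(t*(1-x))) = 0 := by
      linear_combination hE2 - lam*(2*y+1)*t*hX
    rcases mul_eq_zero.mp h0 with h | h
    · linarith
    · linarith
  have hT : t*(u*(1-x)) = v*x := by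
    have h0 : 2*y*(v*x - t*(u*(1-x))) = 0 := by
      linear_combination x*h2vy - t*(1-x)*hY
    rcases mul_eq_zero.mp h0 with h | h
    · exfalso; exact hy (by linarith)
    · linarith
  have h2yx : 0 < 2+y-x := by
    by_contra hc
    push_neg at hc
    nlinarith [hX, mul_nonneg ht2.le (by linarith : (0:ℝ) ≤ -(2+y-x))]
  have hdeq : 2*lam*x^2-(2*u+3*lam)*x+4*u = 2*(u-lam*x)*(2+y-x) := by
    linear_combination -hY
  have hd : (2*lam*x^2-(2*u+3*lam)*x+4*u) < 0 := by
    rw [hdeq]; exact mul_neg_of_neg_of_pos (by linarith) h2yx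
  have hxn : x*(2*u-lam-2*lam*x) = 2*(u-lam*x)*(x-y) := by
    linear_combination hY
  have ht2d : t^2*(2*lam*x^2-(2*u+3*lam)*x+4*u) = x*(2*u-lam-2*lam*x) := by
    rw [hdeq, hxn]
    linear_combination 2*(u-lam*x)*hX
  have hsq : (t*(u*(1-x)))^2 = (v*x)^2 := by rw [hT]
  refine ⟨x, hx1, hd, hY, hT, ?_⟩
  have h0 : x*(v^2*(x*(2*lam*x^2-(2*u+3*lam)*x+4*u)) - u^2*((x-1)^2*(2*u-lam-2*lam*x))) = 0 := by
    linear_combination -(2*lam*x^2-(2*u+3*lam)*x+4*u)*hsq + u^2*(1-x)^2*ht2d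
  rcases mul_eq_zero.mp h0 with h | h
  · exfalso; linarith
  · linarith

set_option maxHeartbeats 1600000 in
/-- Two roots of the key equation in the admissible range must coincide. -/
lemma no_two_roots (lam u v x1 x2 : ℝ) (hlam : 0 < lam) (hu2 : u < lam/2) (hu0 : u ≠ 0)
    (h11 : 1 < x1) (h12 : 1 < x2) (hlt : x1 < x2)
    (hd1 : (2*lam*x1^2-(2*u+3*lam)*x1+4*u) < 0) (hd2 : (2*lam*x2^2-(2*u+3*lam)*x2+4*u) < 0)
    (hr1 : v^2*(x1*(2*lam*x1^2-(2*u+3*lam)*x1+4*u)) = u^2*((x1-1)^2*(2*u-lam-2*lam*x1)))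
    (hr2 : v^2*(x2*(2*lam*x2^2-(2*u+3*lam)*x2+4*u)) = u^2*((x2-1)^2*(2*u-lam-2*lam*x2))) :
    False := by
  have husq : (0:ℝ) < u^2 := by positivity
  have hn1 : 2*u-lam-2*lam*x1 < -(2*lam) := by nlinarith [mul_pos hlam (sub_pos.mpr h11)]
  have hn2 : 2*u-lam-2*lam*x2 < -(2*lam) := by nlinarith [mul_pos hlam (sub_pos.mpr h12)]
  have hnn : (2*u-lam-2*lam*x1)*(2*u-lam-2*lam*x2) - 4*lam^2 > 0 := by
    nlinarith [mul_lt_mul'' (show 2*lam < -(2*u-lam-2*lam*x1) by linarith)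
      (show 2*lam < -(2*u-lam-2*lam*x2) by linarith) (by linarith) (by linarith)]
  have hA : 0 < x1*(x2-1)^2*(x2-x1)*((2*u-lam-2*lam*x1)*(2*u-lam-2*lam*x2)-4*lam^2) := by
    apply mul_pos
    · apply mul_pos
      · exact mul_pos (by linarith : (0:ℝ) < x1) (pow_pos (by linarith : (0:ℝ) < x2-1) 2)
      · linarith
    · exact hnn
  have hB : 0 < ((2*u-lam-2*lam*x1)*(2*lam*x2^2-(2*u+3*lam)*x2+4*u))*((x2-x1)*(x1*x2-1)) := by
    apply mul_pos (mul_pos_of_neg_of_neg (by linarith) hd2)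
    apply mul_pos (by linarith)
    nlinarith [mul_pos (sub_pos.mpr h11) (sub_pos.mpr h12)]
  have hid : x1*(x2-1)^2*((2*u-lam-2*lam*x2)*(2*lam*x1^2-(2*u+3*lam)*x1+4*u))
      - x2*(x1-1)^2*((2*u-lam-2*lam*x1)*(2*lam*x2^2-(2*u+3*lam)*x2+4*u))
      = x1*(x2-1)^2*(x2-x1)*((2*u-lam-2*lam*x1)*(2*u-lam-2*lam*x2)-4*lam^2)
        + ((2*u-lam-2*lam*x1)*(2*lam*x2^2-(2*u+3*lam)*x2+4*u))*((x2-x1)*(x1*x2-1)) := by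
    ring
  have hE : u^2 * (x1*(x2-1)^2*((2*u-lam-2*lam*x2)*(2*lam*x1^2-(2*u+3*lam)*x1+4*u))
      - x2*(x1-1)^2*((2*u-lam-2*lam*x1)*(2*lam*x2^2-(2*u+3*lam)*x2+4*u))) = 0 := by
    linear_combination x2*(2*lam*x2^2-(2*u+3*lam)*x2+4*u)*hr1
      - x1*(2*lam*x1^2-(2*u+3*lam)*x1+4*u)*hr2
  linarith [hE, mul_pos husq (show (0:ℝ) < x1*(x2-1)^2*((2*u-lam-2*lam*x2)*(2*lam*x1^2-(2*u+3*lam)*x1+4*u))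
      - x2*(x1-1)^2*((2*u-lam-2*lam*x1)*(2*lam*x2^2-(2*u+3*lam)*x2+4*u)) by
        rw [hid]; linarith)]

set_option maxHeartbeats 1600000 in
/-- Existence of a solution for each admissible `(u, v)`. -/
lemma exists_sol (lam u v : ℝ) (hlam : 0 < lam) (hu2 : u < lam/2) (hu0 : u ≠ 0) (hv0 : v ≠ 0) :
    ∃ y t : ℝ, (-1 < y ∧ y < 0 ∧ (0 < u → y < -1/2) ∧ (u < 0 → -1/2 < y) ∧
      t^2*(1+y) > 1-y) ∧
      u * (2*y*(1+t^2)) = lam*(2*y+1)*(y+(y+2)*t^2) ∧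
      v * (2*y*(1+t^2)) = lam*(2*y+1)*(t*(1-y-(1+y)*t^2)) := by
  have hdisc : (0:ℝ) < (lam-2*u)*(9*lam-2*u) :=
    mul_pos (by linarith) (by linarith)
  set s : ℝ := Real.sqrt ((lam-2*u)*(9*lam-2*u)) with hsdef
  have hs : s*s = (lam-2*u)*(9*lam-2*u) := Real.mul_self_sqrt hdisc.le
  have hspos : 0 < s := Real.sqrt_pos.mpr hdisc
  set xs : ℝ := (2*u+3*lam+s)/(4*lam) with hxsdef
  have h4l : (0:ℝ) < 4*lam := by linarith
  have hsgt : lam - 2*u < s := by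
    rw [hsdef]
    exact (Real.lt_sqrt (by linarith)).mpr
      (by nlinarith [mul_pos (show (0:ℝ) < lam-2*u by linarith) (show (0:ℝ) < 8*lam by linarith)])
  have hxs1 : 1 < xs := by
    rw [hxsdef, lt_div_iff₀ h4l]; linarith
  have hdxs : 2*lam*xs^2-(2*u+3*lam)*xs+4*u = 0 := by
    rw [hxsdef]
    field_simp
    linear_combination 2*hs
  have hcont : Continuous (fun x : ℝ =>
      u^2*((x-1)^2*(2*u-lam-2*lam*x)) - v^2*(x*(2*lam*x^2-(2*u+3*lam)*x+4*u))) := by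
    fun_prop
  have hG1 : (0:ℝ) < u^2*(((1:ℝ)-1)^2*(2*u-lam-2*lam*1)) - v^2*(1*(2*lam*1^2-(2*u+3*lam)*1+4*u)) := by
    have h : u^2*(((1:ℝ)-1)^2*(2*u-lam-2*lam*1)) - v^2*(1*(2*lam*1^2-(2*u+3*lam)*1+4*u))
        = v^2*(lam-2*u) := by ring
    rw [h]
    have hv2 : (0:ℝ) < v^2 := by positivity
    nlinarith
  have hGxs : u^2*((xs-1)^2*(2*u-lam-2*lam*xs)) - v^2*(xs*(2*lam*xs^2-(2*u+3*lam)*xs+4*u)) < 0 := by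
    rw [hdxs]
    have h1 : 2*u-lam-2*lam*xs < 0 := by nlinarith [mul_pos hlam (sub_pos.mpr hxs1)]
    have h2 : (0:ℝ) < u^2 := by positivity
    have h3 : (0:ℝ) < (xs-1)^2 := pow_pos (by linarith) 2
    nlinarith [mul_pos h2 (mul_pos h3 (show (0:ℝ) < -(2*u-lam-2*lam*xs) by linarith))]
  obtain ⟨ξ, hξmem, hGξ⟩ := intermediate_value_Ioo' (le_of_lt hxs1)
    hcont.continuousOn (Set.mem_Ioo.mpr ⟨hGxs, hG1⟩)
  obtain ⟨hξ1, hξxs⟩ := hξmem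
  simp only at hGξ
  have hchord : (2*lam*ξ^2-(2*u+3*lam)*ξ+4*u)*(xs-1)
      = (2*lam*1^2-(2*u+3*lam)*1+4*u)*(xs-ξ) + (2*lam*xs^2-(2*u+3*lam)*xs+4*u)*(ξ-1)
        - 2*lam*(ξ-1)*(xs-ξ)*(xs-1) := by ring
  have hdξ : 2*lam*ξ^2-(2*u+3*lam)*ξ+4*u < 0 := by
    have h1 : (0:ℝ) < (xs-1) := by linarith
    have h2 : (2*lam*ξ^2-(2*u+3*lam)*ξ+4*u)*(xs-1) < 0 := by
      rw [hchord, hdxs]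
      have h3 : 0 < 2*lam*(ξ-1)*(xs-ξ)*(xs-1) :=
        mul_pos (mul_pos (mul_pos (by linarith) (by linarith)) (by linarith)) h1
      nlinarith [mul_pos (show (0:ℝ) < xs-ξ by linarith) (show (0:ℝ) < lam-2*u by linarith)]
    by_contra hc
    push_neg at hc
    nlinarith [mul_nonneg hc h1.le]
  have hulx : u - lam*ξ < 0 := by nlinarith [mul_pos hlam (sub_pos.mpr hξ1)]
  have hnξ : 2*u-lam-2*lam*ξ < 0 := by linarith
  set y : ℝ := lam*ξ/(2*(u-lam*ξ)) with hydef
  set t : ℝ := v*ξ/(u*(1-ξ)) with htdef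
  have hden : 2*(u-lam*ξ) ≠ 0 := by intro h; linarith
  have hY : 2*y*(u-lam*ξ) = lam*ξ := by
    have hne : u - lam*ξ ≠ 0 := ne_of_lt hulx
    rw [hydef]; field_simp
  have h1ξ : u*(1-ξ) ≠ 0 := mul_ne_zero hu0 (by intro h; linarith)
  have hT : t*(u*(1-ξ)) = v*ξ := by
    have hne : 1 - ξ ≠ 0 := by intro h; linarith
    rw [htdef]; field_simp
  have ht2d : t^2*(2*lam*ξ^2-(2*u+3*lam)*ξ+4*u) = ξ*(2*u-lam-2*lam*ξ) := by
    have hts : t^2*(u*(1-ξ))^2 = (v*ξ)^2 := by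
      rw [← hT]; ring
    have h0 : (u*(1-ξ))^2 * (t^2*(2*lam*ξ^2-(2*u+3*lam)*ξ+4*u) - ξ*(2*u-lam-2*lam*ξ)) = 0 := by
      linear_combination (2*lam*ξ^2-(2*u+3*lam)*ξ+4*u)*hts - ξ*hGξ
    rcases mul_eq_zero.mp h0 with h | h
    · exact absurd h (pow_ne_zero 2 h1ξ)
    · linarith
  have hdeq : 2*lam*ξ^2-(2*u+3*lam)*ξ+4*u = 2*(u-lam*ξ)*(2+y-ξ) := by
    linear_combination -hY
  have hxn : ξ*(2*u-lam-2*lam*ξ) = 2*(u-lam*ξ)*(ξ-y) := by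
    linear_combination hY
  have hX : t^2*(2+y-ξ) = ξ - y := by
    have h0 : (2*(u-lam*ξ)) * (t^2*(2+y-ξ) - (ξ-y)) = 0 := by
      linear_combination ht2d - t^2*hdeq + hxn
    rcases mul_eq_zero.mp h0 with h | h
    · exact absurd h hden
    · linarith
  have hy0 : y < 0 := by
    rw [hydef]
    apply div_neg_of_pos_of_neg
    · exact mul_pos hlam (by linarith)
    · linarith
  have hym1 : -1 < y := by
    by_contra h
    push_neg at h
    nlinarith [hY, mul_pos hlam (sub_pos.mpr hξ1), mul_nonneg (show (0:ℝ) ≤ -1-y by linarith)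
      (show (0:ℝ) ≤ -(u-lam*ξ) by linarith)]
  have hbr1 : 0 < u → y < -1/2 := by
    intro hu
    by_contra h
    push_neg at h
    nlinarith [hY, mul_pos hlam (sub_pos.mpr hξ1), mul_nonneg (show (0:ℝ) ≤ y+1/2 by linarith)
      (show (0:ℝ) ≤ -(u-lam*ξ) by linarith)]
  have hbr2 : u < 0 → -1/2 < y := by
    intro hu
    by_contra h
    push_neg at h
    nlinarith [hY, mul_pos hlam (sub_pos.mpr hξ1), mul_nonneg (show (0:ℝ) ≤ -(y+1/2) by linarith)
      (show (0:ℝ) ≤ -(u-lam*ξ) by linarith)]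
  have hcon : t^2*(1+y) > 1-y := by
    have hkey : (t^2*(1+y)-(1-y))*(2+y-ξ) = 2*(ξ-1) := by
      linear_combination (1+y)*hX
    have h2yx : 0 < 2+y-ξ := by
      by_contra hc
      push_neg at hc
      nlinarith [hdeq, hdξ, mul_nonneg (show (0:ℝ) ≤ -(2*(u-lam*ξ)) by linarith)
        (show (0:ℝ) ≤ -(2+y-ξ) by linarith)]
    by_contra h
    push_neg at h
    nlinarith [mul_nonneg (show (0:ℝ) ≤ -(t^2*(1+y)-(1-y)) by linarith) (le_of_lt h2yx)]
  have hlam21 : lam*(2*y+1)*ξ = 2*u*y := by linear_combination -hY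
  have hE1 : u * (2*y*(1+t^2)) = lam*(2*y+1)*(y+(y+2)*t^2) := by
    linear_combination -(1+t^2)*hlam21 - lam*(2*y+1)*hX
  have hξ0 : (ξ:ℝ) ≠ 0 := ne_of_gt (by linarith)
  have hE2' : ξ * (2*v*y) = ξ * (lam*(2*y+1)*(t*(1-ξ))) := by
    linear_combination -(t*(1-ξ))*hlam21 - 2*y*hT
  have h2vy : 2*v*y = lam*(2*y+1)*(t*(1-ξ)) := mul_left_cancel₀ hξ0 hE2'
  have hE2 : v * (2*y*(1+t^2)) = lam*(2*y+1)*(t*(1-y-(1+y)*t^2)) := by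
    linear_combination (1+t^2)*h2vy + lam*(2*y+1)*t*hX
  exact ⟨y, t, ⟨hym1, hy0, hbr1, hbr2, hcon⟩, hE1, hE2⟩

set_option maxHeartbeats 1600000 in
theorem point_A_bijection (lam : ℝ) (hlam : 0 < lam) :
    Set.BijOn (fun p : ℝ × ℝ => e1Traj lam p.1 p.2)
      ({p : ℝ × ℝ | -1 < p.1 ∧ p.1 < -1/2 ∧ p.2 ^ 2 * (1 + p.1) > 1 - p.1} ∪
       {p : ℝ × ℝ | -1/2 < p.1 ∧ p.1 < 0 ∧ p.2 ^ 2 * (1 + p.1) > 1 - p.1})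
      {z : ℂ | z.re < lam / 2 ∧ z.re ≠ 0 ∧ z.im ≠ 0} := by
  -- basic unpacking of the source set
  have hunpack : ∀ p : ℝ × ℝ,
      p ∈ ({p : ℝ × ℝ | -1 < p.1 ∧ p.1 < -1/2 ∧ p.2 ^ 2 * (1 + p.1) > 1 - p.1} ∪
       {p : ℝ × ℝ | -1/2 < p.1 ∧ p.1 < 0 ∧ p.2 ^ 2 * (1 + p.1) > 1 - p.1}) →
      -1 < p.1 ∧ p.1 < 0 ∧ 2*p.1+1 ≠ 0 ∧ p.2^2*(1+p.1) > 1-p.1 := by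
    rintro p (⟨h1, h2, h3⟩ | ⟨h1, h2, h3⟩)
    · exact ⟨h1, by linarith, by intro h; nlinarith, h3⟩
    · exact ⟨by linarith, h2, by intro h; nlinarith, h3⟩
  have hmapsTo : Set.MapsTo (fun p : ℝ × ℝ => e1Traj lam p.1 p.2)
      ({p : ℝ × ℝ | -1 < p.1 ∧ p.1 < -1/2 ∧ p.2 ^ 2 * (1 + p.1) > 1 - p.1} ∪
       {p : ℝ × ℝ | -1/2 < p.1 ∧ p.1 < 0 ∧ p.2 ^ 2 * (1 + p.1) > 1 - p.1})
      {z : ℂ | z.re < lam / 2 ∧ z.re ≠ 0 ∧ z.im ≠ 0} := by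
    intro p hp
    obtain ⟨h1, h2, h3, h4⟩ := hunpack p hp
    set y := p.1
    set t := p.2
    have hy : y ≠ 0 := ne_of_lt h2
    have ht1 : (0:ℝ) < 1 + t^2 := by positivity
    have hden : 2*y*(1+t^2) < 0 := by
      apply mul_neg_of_neg_of_pos (by linarith) ht1
    have ht0 : t ≠ 0 := by
      intro h
      rw [h] at h4
      nlinarith
    have hx : (0:ℝ) < y+(y+2)*t^2 := by nlinarith
    have hxm : 1-y-(1+y)*t^2 < 0 := by nlinarith
    refine ⟨?_, ?_, ?_⟩
    · show (e1Traj lam y t).re < lam/2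
      rw [e1_re lam y t hy, div_lt_iff_of_neg hden]
      have hy2 : (0:ℝ) < y^2 := by positivity
      nlinarith [sq_nonneg ((y+1)*t), mul_pos hlam hy2,
        mul_nonneg hlam.le (mul_nonneg (sq_nonneg (y+1)) (sq_nonneg t))]
    · show (e1Traj lam y t).re ≠ 0
      rw [e1_re lam y t hy]
      apply div_ne_zero _ (ne_of_lt hden)
      exact mul_ne_zero (mul_ne_zero (ne_of_gt hlam) h3) (ne_of_gt hx)
    · show (e1Traj lam y t).im ≠ 0
      rw [e1_im lam y t hy]
      apply div_ne_zero _ (ne_of_lt hden)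
      exact mul_ne_zero (mul_ne_zero (ne_of_gt hlam) h3)
        (mul_ne_zero ht0 (ne_of_lt hxm))
  refine ⟨hmapsTo, ?_, ?_⟩
  · -- injectivity
    intro p hp q hq hfeq
    obtain ⟨hp1, hp2, hp3, hp4⟩ := hunpack p hp
    obtain ⟨hq1, hq2, hq3, hq4⟩ := hunpack q hq
    set z := e1Traj lam q.1 q.2 with hz
    have hzΩ : z ∈ {z : ℂ | z.re < lam / 2 ∧ z.re ≠ 0 ∧ z.im ≠ 0} := hmapsTo hq
    obtain ⟨hu2, hu0, hv0⟩ := hzΩ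
    have hEp := (e1_eq_iff lam p.1 p.2 (ne_of_lt hp2) z).mp hfeq
    have hEq := (e1_eq_iff lam q.1 q.2 (ne_of_lt hq2) z).mp rfl
    obtain ⟨xp, hxp1, hxpd, hxpY, hxpT, hxpR⟩ := solution_facts lam z.re z.im p.1 p.2
      hlam hu2 hu0 hp2 hp4 hEp.1 hEp.2
    obtain ⟨xq, hxq1, hxqd, hxqY, hxqT, hxqR⟩ := solution_facts lam z.re z.im q.1 q.2
      hlam hu2 hu0 hq2 hq4 hEq.1 hEq.2
    have hxeq : xp = xq := by
      rcases lt_trichotomy xp xq with h | h | h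
      · exact absurd (no_two_roots lam z.re z.im xp xq hlam hu2 hu0 hxp1 hxq1 h
          hxpd hxqd hxpR hxqR) not_false
      · exact h
      · exact absurd (no_two_roots lam z.re z.im xq xp hlam hu2 hu0 hxq1 hxp1 h
          hxqd hxpd hxqR hxpR) not_false
    rw [← hxeq] at hxqY hxqT
    have hux : z.re - lam*xp < 0 := by nlinarith [mul_pos hlam (sub_pos.mpr hxp1)]
    have hyeq : p.1 = q.1 := by
      have h0 : (2*(z.re - lam*xp)) * (p.1 - q.1) = 0 := by
        linear_combination hxpY - hxqY
      rcases mul_eq_zero.mp h0 with h | h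
      · exfalso; linarith
      · linarith
    have hteq : p.2 = q.2 := by
      have h0 : (z.re*(1-xp)) * (p.2 - q.2) = 0 := by
        linear_combination hxpT - hxqT
      rcases mul_eq_zero.mp h0 with h | h
      · exfalso
        exact (mul_ne_zero hu0 (show (1:ℝ)-xp ≠ 0 by intro h'; linarith)) h
      · linarith
    exact Prod.ext hyeq hteq
  · -- surjectivity
    intro z hz
    obtain ⟨hu2, hu0, hv0⟩ := hz
    obtain ⟨y, t, ⟨h1, h2, h3, h4, h5⟩, hE1, hE2⟩ :=
      exists_sol lam z.re z.im hlam hu2 hu0 hv0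
    refine ⟨(y, t), ?_, ?_⟩
    · rcases lt_or_gt_of_ne hu0 with hu | hu
      · right
        exact ⟨h4 hu, h2, h5⟩
      · left
        exact ⟨h1, h3 hu, h5⟩
    · exact (e1_eq_iff lam y t (ne_of_lt h2) z).mpr ⟨hE1, hE2⟩
end

section
/- Let C′ be a Hermitian 4×4 complex matrix, let t₁, t₂ be nonzero reals and k real, let T = diag(t₁, t₂, −t₁, −t₂) and I = (0,0,1,1)ᵀ ∈ ℂ⁴. Suppose e′ = (e₁, conj(e₁), k/2, k/2)ᵀ satisfies C′e′ = I, and w′ = (w₁, 1, t₂/t₁, 1)ᵀ satisfies C′w′ = Tw′. Then t₁·conj(e₁)·w₁ + t₂·e₁ = t₂·η, where η = k + 1/t₁ + 1/t₂. -/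
open Matrix Complex

theorem point_D_scalar_relation
    (C' : Matrix (Fin 4) (Fin 4) ℂ) (hC : C'.IsHermitian)
    (t₁ t₂ k : ℝ) (ht₁ : t₁ ≠ 0) (ht₂ : t₂ ≠ 0) (e₁ w₁ : ℂ)
    (he : C'.mulVec ![e₁, (starRingEnd ℂ) e₁, (k : ℂ) / 2, (k : ℂ) / 2] = ![0, 0, 1, 1])
    (hw : C'.mulVec ![w₁, 1, ((t₂ : ℂ) / (t₁ : ℂ)), 1] =
      (Matrix.diagonal ![(t₁ : ℂ), (t₂ : ℂ), -(t₁ : ℂ), -(t₂ : ℂ)]).mulVec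
        ![w₁, 1, ((t₂ : ℂ) / (t₁ : ℂ)), 1]) :
    (t₁ : ℂ) * (starRingEnd ℂ) e₁ * w₁ + (t₂ : ℂ) * e₁ =
      (t₂ : ℂ) * ((k : ℂ) + 1 / (t₁ : ℂ) + 1 / (t₂ : ℂ)) := by
  set e' : Fin 4 → ℂ := ![e₁, (starRingEnd ℂ) e₁, (k : ℂ) / 2, (k : ℂ) / 2] with he'
  set w' : Fin 4 → ℂ := ![w₁, 1, ((t₂ : ℂ) / (t₁ : ℂ)), 1] with hw'
  have key : star e' ⬝ᵥ C'.mulVec w' = star (C'.mulVec e') ⬝ᵥ w' := by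
    rw [Matrix.star_mulVec, hC.eq, Matrix.dotProduct_mulVec]
  rw [hw, he] at key
  have ht₁' : (t₁ : ℂ) ≠ 0 := by exact_mod_cast ht₁
  have ht₂' : (t₂ : ℂ) ≠ 0 := by exact_mod_cast ht₂
  simp only [he', hw', Matrix.mulVec_diagonal, dotProduct, Fin.sum_univ_four,
    Matrix.cons_val_zero, Matrix.cons_val_one, Matrix.head_cons, Matrix.cons_val_two,
    Matrix.tail_cons, Matrix.cons_val_three, Pi.star_apply, star_one, star_zero,
    RingHom.star_def, RingHom.coe_coe, starRingEnd_self_apply, map_div₀, map_ofNat,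
    Complex.conj_ofReal, Complex.star_def, map_zero, map_one] at key
  field_simp at key
  field_simp
  apply mul_left_cancel₀ (a := 4*(t₁:ℂ)) (by simpa using ht₁')
  linear_combination 2 * (t₁:ℂ) * key
end

section
/- Let C′ be a Hermitian 4×4 complex matrix, let t₀, t₁, t₂ be reals with 2t₀ + t₁ + t₂ ≠ 0, let T = diag(t₁, t₂, −t₁, −t₂) and T₀ = diag(−t₀, −t₀, t₀, t₀). Suppose v′ = (v₁, 1, 1, 1)ᵀ satisfies v′ = C′Tv′, and c′ = (c₁, conj(c₁), 1, 1)ᵀ satisfies c′ = C′T₀c′. Then α₁·conj(c₁)·v₁ + α₂·c₁ = 1, where α₁ = (t₀ + t₁)/(2t₀ + t₁ + t₂) and α₂ = (t₀ + t₂)/(2t₀ + t₁ + t₂) (so α₁ + α₂ = 1). -/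
open Matrix Complex

theorem point_B_scalar_relation
    (C' : Matrix (Fin 4) (Fin 4) ℂ) (hC : C'.IsHermitian)
    (t₀ t₁ t₂ : ℝ) (hden : 2 * t₀ + t₁ + t₂ ≠ 0) (v₁ c₁ : ℂ)
    (hv : ![v₁, 1, 1, 1] =
      C'.mulVec ((Matrix.diagonal ![(t₁ : ℂ), (t₂ : ℂ), -(t₁ : ℂ), -(t₂ : ℂ)]).mulVec
        ![v₁, 1, 1, 1]))
    (hc : ![c₁, (starRingEnd ℂ) c₁, 1, 1] =
      C'.mulVec ((Matrix.diagonal ![-(t₀ : ℂ), -(t₀ : ℂ), (t₀ : ℂ), (t₀ : ℂ)]).mulVec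
        ![c₁, (starRingEnd ℂ) c₁, 1, 1])) :
    (((t₀ + t₁) / (2 * t₀ + t₁ + t₂) : ℝ) : ℂ) * (starRingEnd ℂ) c₁ * v₁ +
      (((t₀ + t₂) / (2 * t₀ + t₁ + t₂) : ℝ) : ℂ) * c₁ = 1 := by
  set v : Fin 4 → ℂ := ![v₁, 1, 1, 1] with hvdef
  set c : Fin 4 → ℂ := ![c₁, (starRingEnd ℂ) c₁, 1, 1] with hcdef
  set T : Matrix (Fin 4) (Fin 4) ℂ :=
    Matrix.diagonal ![(t₁ : ℂ), (t₂ : ℂ), -(t₁ : ℂ), -(t₂ : ℂ)] with hT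
  set T₀ : Matrix (Fin 4) (Fin 4) ℂ :=
    Matrix.diagonal ![-(t₀ : ℂ), -(t₀ : ℂ), (t₀ : ℂ), (t₀ : ℂ)] with hT₀
  have key : star c ⬝ᵥ (T *ᵥ v) = star (T₀ *ᵥ c) ⬝ᵥ v := by
    calc star c ⬝ᵥ (T *ᵥ v)
        = star (C' *ᵥ (T₀ *ᵥ c)) ⬝ᵥ (T *ᵥ v) := by rw [← hc]
      _ = ((star (T₀ *ᵥ c)) ᵥ* C'ᴴ) ⬝ᵥ (T *ᵥ v) := by rw [Matrix.star_mulVec]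
      _ = ((star (T₀ *ᵥ c)) ᵥ* C') ⬝ᵥ (T *ᵥ v) := by rw [hC.eq]
      _ = star (T₀ *ᵥ c) ⬝ᵥ (C' *ᵥ (T *ᵥ v)) := (Matrix.dotProduct_mulVec _ C' _).symm
      _ = star (T₀ *ᵥ c) ⬝ᵥ v := by rw [← hv]
  simp only [hvdef, hcdef, hT, hT₀, dotProduct, Fin.sum_univ_four,
    Matrix.mulVec_diagonal, Pi.star_apply, Matrix.cons_val_zero, Matrix.cons_val_one,
    Matrix.head_cons, Matrix.cons_val_two, Matrix.tail_cons, Matrix.cons_val_three,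
    star_mul', star_one, _root_.map_one, RCLike.star_def, Complex.conj_conj, Complex.conj_ofReal,
    map_neg, star_neg] at key
  have hden' : (2 * (t₀ : ℂ) + t₁ + t₂) ≠ 0 := by
    have : ((2 * t₀ + t₁ + t₂ : ℝ) : ℂ) ≠ 0 := by exact_mod_cast hden
    push_cast at this
    exact this
  have h2 : ((t₀ : ℂ) + t₁) * ((starRingEnd ℂ) c₁) * v₁ + ((t₀ : ℂ) + t₂) * c₁
      = 2 * t₀ + t₁ + t₂ := by linear_combination key
  push_cast
  field_simp
  rw [h2, div_eq_one_iff_eq (by intro h; exact hden' (by linear_combination h))]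
  ring
end

section
/- Let α₁, α₂ be real with α₁ + α₂ = 1 and α₁ ≠ 0, let θ be real, and let c₁ be a nonzero complex number. Set v₁ = (1 − α₂c₁)/(α₁·conj(c₁)) and, assuming the denominator is nonzero, set φ = conj(c₁)(1 − α₁·conj(c₁)e^{−2iθ} − α₂c₁e^{2iθ})e^{−3iθ}/(1 − α₂c₁ + α₂·conj(c₁)e^{−4iθ} − conj(c₁)e^{−2iθ}). Assume φ is real. Then for every real τ with 1 + e^{−iθ}τ ≠ 0 and 1 + φτ ≠ 0, the quantities v₁′ = (v₁ + e^{−3iθ}τ)(1 + e^{iθ}τ)/(1 + e^{−iθ}τ)² and c₁′ = (c₁ + e^{−2iθ}φτ)(1 + e^{iθ}τ)/((1 + φτ)(1 + e^{−iθ}τ)) satisfy α₁·conj(c₁′)·v₁′ + α₂·c₁′ = 1. -/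
open Complex

set_option maxHeartbeats 2000000 in
lemma key_lemma (a₁ a₂ c d f v E τ : ℂ) (ha₁ : a₁ ≠ 0) (hd : d ≠ 0) (hE : E ≠ 0)
    (hsum : a₁ + a₂ = 1)
    (hD : 1 - a₂*c + a₂*d*(E⁻¹)^4 - d*(E⁻¹)^2 ≠ 0)
    (hv : v = (1 - a₂*c)/(a₁*d))
    (hf : f = d*(1 - a₁*d*(E⁻¹)^2 - a₂*c*E^2)*(E⁻¹)^3 /
      (1 - a₂*c + a₂*d*(E⁻¹)^4 - d*(E⁻¹)^2))
    (h1 : 1 + E⁻¹*τ ≠ 0) (h1' : 1 + E*τ ≠ 0) (h2 : 1 + f*τ ≠ 0) :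
    a₁ * ((d + E^2*f*τ)*(1+E⁻¹*τ)/((1+f*τ)*(1+E*τ))) * ((v+(E⁻¹)^3*τ)*(1+E*τ)/(1+E⁻¹*τ)^2)
      + a₂*((c+(E⁻¹)^2*f*τ)*(1+E*τ)/((1+f*τ)*(1+E⁻¹*τ))) = 1 := by
  have hv'' : a₁ * d * v = 1 - a₂ * c := by
    rw [hv]; field_simp
  have hf'' : f * (E^4 - a₂*c*E^4 + a₂*d - d*E^2) * E = d*(E^2 - a₁*d - a₂*c*E^4) := by
    rw [hf, div_mul_eq_mul_div, div_mul_eq_mul_div, div_eq_iff hD]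
    field_simp
  have hEτ : E + τ ≠ 0 := by
    intro h; apply h1; field_simp; linear_combination h
  have hG : a₁*(d + E^2*f*τ)*(E^3*v + τ) + a₂*(c*E^2 + f*τ)*(1 + E*τ)*E
      = (1 + f*τ)*(E + τ)*E^2 := by
    have hdG : d * (a₁*(d + E^2*f*τ)*(E^3*v + τ) + a₂*(c*E^2 + f*τ)*(1 + E*τ)*E)
        = d * ((1 + f*τ)*(E + τ)*E^2) := by
      linear_combination (d*E^3 + τ*E^5*f) * hv'' + τ * hf'' + d*f*τ^2*E^2 * hsum
    exact mul_left_cancel₀ hd hdG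
  field_simp
  linear_combination hG


theorem point_B_trajectory_relation (α₁ α₂ θ : ℝ) (hsum : α₁ + α₂ = 1) (hα₁ : α₁ ≠ 0)
    (c₁ : ℂ) (hc : c₁ ≠ 0)
    (v₁ φ : ℂ)
    (hv₁ : v₁ = (1 - (α₂ : ℂ) * c₁) / ((α₁ : ℂ) * (starRingEnd ℂ) c₁))
    (hden : 1 - (α₂ : ℂ) * c₁ +
        (α₂ : ℂ) * (starRingEnd ℂ) c₁ * Complex.exp (-(4 * (θ : ℂ)) * Complex.I) -
        (starRingEnd ℂ) c₁ * Complex.exp (-(2 * (θ : ℂ)) * Complex.I) ≠ 0)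
    (hφ : φ = (starRingEnd ℂ) c₁ *
        (1 - (α₁ : ℂ) * (starRingEnd ℂ) c₁ * Complex.exp (-(2 * (θ : ℂ)) * Complex.I) -
          (α₂ : ℂ) * c₁ * Complex.exp ((2 * (θ : ℂ)) * Complex.I)) *
        Complex.exp (-(3 * (θ : ℂ)) * Complex.I) /
        (1 - (α₂ : ℂ) * c₁ +
          (α₂ : ℂ) * (starRingEnd ℂ) c₁ * Complex.exp (-(4 * (θ : ℂ)) * Complex.I) -
          (starRingEnd ℂ) c₁ * Complex.exp (-(2 * (θ : ℂ)) * Complex.I)))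
    (hφreal : φ.im = 0) :
    ∀ τ : ℝ, 1 + Complex.exp (-(θ : ℂ) * Complex.I) * (τ : ℂ) ≠ 0 → 1 + φ * (τ : ℂ) ≠ 0 →
      (α₁ : ℂ) * (starRingEnd ℂ)
          ((c₁ + Complex.exp (-(2 * (θ : ℂ)) * Complex.I) * φ * (τ : ℂ)) *
            (1 + Complex.exp ((θ : ℂ) * Complex.I) * (τ : ℂ)) /
            ((1 + φ * (τ : ℂ)) * (1 + Complex.exp (-(θ : ℂ) * Complex.I) * (τ : ℂ)))) *
        ((v₁ + Complex.exp (-(3 * (θ : ℂ)) * Complex.I) * (τ : ℂ)) *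
          (1 + Complex.exp ((θ : ℂ) * Complex.I) * (τ : ℂ)) /
          (1 + Complex.exp (-(θ : ℂ) * Complex.I) * (τ : ℂ)) ^ 2) +
      (α₂ : ℂ) * ((c₁ + Complex.exp (-(2 * (θ : ℂ)) * Complex.I) * φ * (τ : ℂ)) *
          (1 + Complex.exp ((θ : ℂ) * Complex.I) * (τ : ℂ)) /
          ((1 + φ * (τ : ℂ)) * (1 + Complex.exp (-(θ : ℂ) * Complex.I) * (τ : ℂ)))) = 1 := by
  intro τ hτ1 hτ2
  set E : ℂ := Complex.exp ((θ : ℂ) * Complex.I) with hEdef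
  have hE : E ≠ 0 := Complex.exp_ne_zero _
  have e1 : Complex.exp (-(θ : ℂ) * Complex.I) = E⁻¹ := by
    rw [show (-(θ : ℂ) * Complex.I) = -((θ : ℂ) * Complex.I) by ring, Complex.exp_neg]
  have e2 : Complex.exp (-(2 * (θ : ℂ)) * Complex.I) = (E⁻¹)^2 := by
    rw [show (-(2 * (θ : ℂ)) * Complex.I) = -((θ:ℂ)*Complex.I) + -((θ:ℂ)*Complex.I) by ring,
      Complex.exp_add, Complex.exp_neg]
    ring
  have e3 : Complex.exp (-(3 * (θ : ℂ)) * Complex.I) = (E⁻¹)^3 := by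
    rw [show (-(3 * (θ : ℂ)) * Complex.I)
        = -((θ:ℂ)*Complex.I) + (-((θ:ℂ)*Complex.I) + -((θ:ℂ)*Complex.I)) by ring,
      Complex.exp_add, Complex.exp_add, Complex.exp_neg]
    ring
  have e4 : Complex.exp (-(4 * (θ : ℂ)) * Complex.I) = (E⁻¹)^4 := by
    rw [show (-(4 * (θ : ℂ)) * Complex.I)
        = -((θ:ℂ)*Complex.I) + (-((θ:ℂ)*Complex.I) + (-((θ:ℂ)*Complex.I) + -((θ:ℂ)*Complex.I))) by ring,
      Complex.exp_add, Complex.exp_add, Complex.exp_add, Complex.exp_neg]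
    ring
  have e2' : Complex.exp ((2 * (θ : ℂ)) * Complex.I) = E^2 := by
    rw [show ((2 * (θ : ℂ)) * Complex.I) = (θ:ℂ)*Complex.I + (θ:ℂ)*Complex.I by ring,
      Complex.exp_add]
    ring
  have hφc : (starRingEnd ℂ) φ = φ := Complex.conj_eq_iff_im.mpr hφreal
  have hτc : (starRingEnd ℂ) (τ : ℂ) = (τ : ℂ) := Complex.conj_ofReal τ
  have hcE : (starRingEnd ℂ) E = E⁻¹ := by
    rw [hEdef, ← Complex.exp_conj, ← Complex.exp_neg]
    congr 1
    simp [Complex.conj_ofReal]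
  have hcEinv : (starRingEnd ℂ) E⁻¹ = E := by
    rw [map_inv₀, hcE, inv_inv]
  have hd : (starRingEnd ℂ) c₁ ≠ 0 := by
    simpa using hc
  have hα₁' : (α₁ : ℂ) ≠ 0 := by exact_mod_cast hα₁
  have hsum' : (α₁ : ℂ) + (α₂ : ℂ) = 1 := by exact_mod_cast hsum
  rw [e1] at hτ1 ⊢
  rw [e2, e3]
  rw [e2, e3, e4, e2'] at hφ
  rw [e4, e2] at hden
  -- compute the conjugate
  have hconj : (starRingEnd ℂ)
      ((c₁ + (E⁻¹)^2 * φ * (τ:ℂ)) * (1 + E * (τ:ℂ)) / ((1 + φ * (τ:ℂ)) * (1 + E⁻¹ * (τ:ℂ))))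
      = ((starRingEnd ℂ) c₁ + E^2 * φ * (τ:ℂ)) * (1 + E⁻¹ * (τ:ℂ))
        / ((1 + φ * (τ:ℂ)) * (1 + E * (τ:ℂ))) := by
    simp only [map_div₀, map_mul, map_add, map_one, map_pow, hφc, hτc, hcE, hcEinv]
  rw [hconj]
  have h1' : 1 + E * (τ:ℂ) ≠ 0 := by
    intro h
    apply hτ1
    have := congrArg (starRingEnd ℂ) h
    simpa [map_add, map_mul, hcE, hτc] using this
  exact key_lemma (α₁:ℂ) (α₂:ℂ) c₁ ((starRingEnd ℂ) c₁) φ v₁ E (τ:ℂ)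
    hα₁' hd hE hsum' hden hv₁ hφ hτ1 h1' hτ2
end

section
/- Let w be a nonzero complex number with real part w_R and imaginary part w_I, let δ be real, and define f(s) = (w − s)(1 + (i − δ)s)/(w(1 − (i + δ)s)) for real s (the denominator is nonzero for every real s). If γ is a real number satisfying 1 − 2δw_R + (δ² + 1)(w_R² − γ²) + 2w_I = 0, then f(w_R + γ) = f(w_R − γ). -/
open Complex

theorem point_B_self_intersection (w : ℂ) (hw : w ≠ 0) (δ γ : ℝ)
    (hγ : 1 - 2 * δ * w.re + (δ ^ 2 + 1) * (w.re ^ 2 - γ ^ 2) + 2 * w.im = 0) :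
    (fun s : ℝ => (w - (s : ℂ)) * (1 + (Complex.I - (δ : ℂ)) * (s : ℂ)) /
        (w * (1 - (Complex.I + (δ : ℂ)) * (s : ℂ)))) (w.re + γ) =
    (fun s : ℝ => (w - (s : ℂ)) * (1 + (Complex.I - (δ : ℂ)) * (s : ℂ)) /
        (w * (1 - (Complex.I + (δ : ℂ)) * (s : ℂ)))) (w.re - γ) := by
  have hden : ∀ s : ℝ, (1 - (Complex.I + (δ : ℂ)) * (s : ℂ)) ≠ 0 := by
    intro s h
    have him := congrArg Complex.im h
    simp [Complex.sub_im, Complex.mul_im] at him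
    have hre := congrArg Complex.re h
    simp [Complex.sub_re, Complex.mul_re, him] at hre
  have h : ((1 - 2 * δ * w.re + (δ ^ 2 + 1) * (w.re ^ 2 - γ ^ 2) + 2 * w.im : ℝ) : ℂ) = 0 := by
    exact_mod_cast hγ
  push_cast at h
  have hw' : w = (w.re : ℂ) + (w.im : ℂ) * Complex.I := (Complex.re_add_im w).symm
  simp only []
  rw [div_eq_div_iff (mul_ne_zero hw (hden _)) (mul_ne_zero hw (hden _))]
  push_cast
  linear_combination (-2*(γ:ℂ)*w)*h + (4*Complex.I*(γ:ℂ)*w)*hw' +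
    (2*(γ:ℂ)*w*(2*(w.im:ℂ)+(w.re:ℂ)^2-(γ:ℂ)^2))*Complex.I_sq
end

section
/- Let C′ be a Hermitian 4×4 complex matrix, let t₀ be real and t₁, t₂ be nonzero reals with t₁ + t₂ + 2t₀t₁t₂ ≠ 0, let T = diag(t₁, t₂, −t₁, −t₂) and T₀ = diag(−t₀, −t₀, t₀, t₀). Suppose w′ = (w₁, −1, t₂/t₁, 1)ᵀ satisfies C′w′ = Tw′, and c′ = (c₁, conj(c₁), 1, 1)ᵀ satisfies c′ = C′T₀c′. Then β₁(t₁/t₂)·conj(c₁)·w₁ − β₂·c₁ = −1, where β₁ = t₂(1 + t₀t₁)/(t₁ + t₂ + 2t₀t₁t₂) and β₂ = t₁(1 + t₀t₂)/(t₁ + t₂ + 2t₀t₁t₂) (so β₁ + β₂ = 1). -/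
open Matrix Complex

theorem point_C_scalar_relation
    (C' : Matrix (Fin 4) (Fin 4) ℂ) (hC : C'.IsHermitian)
    (t₀ t₁ t₂ : ℝ) (ht₁ : t₁ ≠ 0) (ht₂ : t₂ ≠ 0)
    (hden : t₁ + t₂ + 2 * t₀ * t₁ * t₂ ≠ 0) (w₁ c₁ : ℂ)
    (hw : C'.mulVec ![w₁, -1, ((t₂ : ℂ) / (t₁ : ℂ)), 1] =
      (Matrix.diagonal ![(t₁ : ℂ), (t₂ : ℂ), -(t₁ : ℂ), -(t₂ : ℂ)]).mulVec
        ![w₁, -1, ((t₂ : ℂ) / (t₁ : ℂ)), 1])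
    (hc : ![c₁, (starRingEnd ℂ) c₁, 1, 1] =
      C'.mulVec ((Matrix.diagonal ![-(t₀ : ℂ), -(t₀ : ℂ), (t₀ : ℂ), (t₀ : ℂ)]).mulVec
        ![c₁, (starRingEnd ℂ) c₁, 1, 1])) :
    ((t₂ * (1 + t₀ * t₁) / (t₁ + t₂ + 2 * t₀ * t₁ * t₂) : ℝ) : ℂ) * ((t₁ : ℂ) / (t₂ : ℂ)) *
        (starRingEnd ℂ) c₁ * w₁ -
      ((t₁ * (1 + t₀ * t₂) / (t₁ + t₂ + 2 * t₀ * t₁ * t₂) : ℝ) : ℂ) * c₁ = -1 := by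
  set vw : Fin 4 → ℂ := ![w₁, -1, ((t₂ : ℂ) / (t₁ : ℂ)), 1] with hvw
  set vc : Fin 4 → ℂ := ![c₁, (starRingEnd ℂ) c₁, 1, 1] with hvc
  set T0 : Matrix (Fin 4) (Fin 4) ℂ :=
    Matrix.diagonal ![-(t₀ : ℂ), -(t₀ : ℂ), (t₀ : ℂ), (t₀ : ℂ)] with hT0
  set Td : Matrix (Fin 4) (Fin 4) ℂ :=
    Matrix.diagonal ![(t₁ : ℂ), (t₂ : ℂ), -(t₁ : ℂ), -(t₂ : ℂ)] with hTd
  have key : star vc ⬝ᵥ vw = star (T0 *ᵥ vc) ⬝ᵥ (Td *ᵥ vw) := by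
    calc star vc ⬝ᵥ vw = star (C' *ᵥ (T0 *ᵥ vc)) ⬝ᵥ vw := by rw [← hc]
      _ = (star (T0 *ᵥ vc) ᵥ* C'ᴴ) ⬝ᵥ vw := by rw [star_mulVec]
      _ = (star (T0 *ᵥ vc) ᵥ* C') ⬝ᵥ vw := by rw [hC.eq]
      _ = star (T0 *ᵥ vc) ⬝ᵥ (C' *ᵥ vw) := by rw [dotProduct_mulVec]
      _ = star (T0 *ᵥ vc) ⬝ᵥ (Td *ᵥ vw) := by rw [hw]
  simp only [hvw, hvc, hT0, hTd, mulVec_diagonal, dotProduct, Fin.sum_univ_four,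
    Pi.star_apply, Matrix.cons_val_zero, Matrix.cons_val_one, Matrix.head_cons,
    Matrix.cons_val_two, Matrix.cons_val_three, Matrix.tail_cons, star_mul',
    star_neg, star_one, mulVec_diagonal] at key
  simp only [Complex.star_def, Complex.conj_ofReal, RingHomCompTriple.comp_apply,
    RingHom.id_apply, Complex.conj_conj] at key
  have hden' : (t₁ : ℂ) + t₂ + 2 * t₀ * t₁ * t₂ ≠ 0 := by
    exact_mod_cast Complex.ofReal_ne_zero.mpr hden
  have ht₁' : (t₁ : ℂ) ≠ 0 := Complex.ofReal_ne_zero.mpr ht₁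
  have ht₂' : (t₂ : ℂ) ≠ 0 := Complex.ofReal_ne_zero.mpr ht₂
  push_cast
  field_simp at key ⊢
  rw [div_eq_iff (by contrapose! hden'; linear_combination hden')]
  linear_combination key
end
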